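/- Let Γ be a closed, subdegree finite group of permutations of a countable set S. Then the following are equivalent: (1) Γ is compact; (2) Γ stabilises some finite subset of S setwise; (3) some point of S has finite orbit under Γ; (4) every point of S has finite orbit under Γ. -/

import Mathlib

/-- `Γ` is subdegree finite if every orbit of every point stabiliser is finite. -/
def SubdegreeFinite {S : Type*} (Γ : Subgroup (Equiv.Perm S)) : Prop :=
  ∀ s t : S, Set.Finite {u : S | ∃ γ ∈ Γ, γ s = s ∧ γ t = u}


/-- The permutation topology on `Equiv.Perm S`: the topology of pointwise convergence,
where `S` carries the discrete topology. -/
noncomputable def permTop (S : Type*) : TopologicalSpace (Equiv.Perm S) :=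
  letI : TopologicalSpace S := ⊥
  TopologicalSpace.induced (fun g => (g : S → S)) Pi.topologicalSpace

/-- The permutation topology on a subgroup `Γ` of `Equiv.Perm S` (subspace topology). -/
noncomputable def grpTop {S : Type*} (Γ : Subgroup (Equiv.Perm S)) :
    TopologicalSpace Γ :=
  (permTop S).induced (fun γ => (γ : Equiv.Perm S))

/-- Finite approximation from the closure in a product of discrete spaces. -/
lemma closure_pi_approx {S : Type*} [TopologicalSpace S] [DiscreteTopology S]
    {A : Set (S → S)} {f : S → S} (hf : f ∈ closure A) (F : Finset S) :
    ∃ g ∈ A, ∀ x ∈ F, g x = f x := by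
  have hopen : IsOpen ((F : Set S).pi fun x => ({f x} : Set S)) :=
    isOpen_set_pi F.finite_toSet fun i _ => isOpen_discrete _
  have hmem : f ∈ (F : Set S).pi fun x => ({f x} : Set S) := fun i _ => rfl
  obtain ⟨g, hg1, hg2⟩ := mem_closure_iff.mp hf _ hopen hmem
  exact ⟨g, hg2, fun x hx => hg1 x hx⟩

theorem compact_iff_finite_orbits {S : Type*} [Countable S] [Nonempty S]
    (Γ : Subgroup (Equiv.Perm S))
    (hclosed : @IsClosed (Equiv.Perm S) (permTop S) (Γ : Set (Equiv.Perm S)))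
    (hsd : SubdegreeFinite Γ) :
    List.TFAE
      [@CompactSpace Γ (grpTop Γ),
       ∃ S' : Finset S, S'.Nonempty ∧ ∀ γ ∈ Γ, ∀ s ∈ S', γ s ∈ S',
       ∃ s : S, Set.Finite {t : S | ∃ γ ∈ Γ, γ s = t},
       ∀ s : S, Set.Finite {t : S | ∃ γ ∈ Γ, γ s = t}] := by
  classical
  letI : TopologicalSpace S := ⊥
  haveI : DiscreteTopology S := ⟨rfl⟩
  letI : TopologicalSpace (Equiv.Perm S) := permTop S
  letI : TopologicalSpace Γ := grpTop Γ
  have hperm : permTop S =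
      TopologicalSpace.induced (fun g : Equiv.Perm S => (g : S → S)) Pi.topologicalSpace := rfl
  -- the coercion Γ → (S → S) is inducing
  have hind : grpTop Γ = TopologicalSpace.induced
      (fun γ : Γ => ((γ : Equiv.Perm S) : S → S)) Pi.topologicalSpace := by
    rw [grpTop, hperm, induced_compose]
    rfl
  tfae_have 1 → 4 := by
    intro h s
    have hcont : Continuous fun γ : Γ => ((γ : Equiv.Perm S) : S → S) s := by
      have h1 : Continuous fun γ : Γ => ((γ : Equiv.Perm S) : S → S) := by
        rw [continuous_iff_le_induced, ← hind]
      exact (continuous_apply s).comp h1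
    have hc : IsCompact (Set.range fun γ : Γ => ((γ : Equiv.Perm S) : S → S) s) :=
      isCompact_range hcont
    refine hc.finite_of_discrete.subset ?_
    rintro t ⟨γ, hγΓ, rfl⟩
    exact ⟨⟨γ, hγΓ⟩, rfl⟩
  tfae_have 4 → 3 := fun h => ⟨Classical.arbitrary S, h _⟩
  tfae_have 3 → 2 := by
    rintro ⟨s, hs⟩
    refine ⟨hs.toFinset, ⟨s, hs.mem_toFinset.mpr ⟨1, Γ.one_mem, rfl⟩⟩, ?_⟩
    intro γ hγ t ht
    rw [Set.Finite.mem_toFinset] at ht ⊢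
    obtain ⟨δ, hδ, rfl⟩ := ht
    exact ⟨γ * δ, Γ.mul_mem hγ hδ, rfl⟩
  tfae_have 2 → 3 := by
    rintro ⟨S', ⟨s, hs⟩, hinv⟩
    refine ⟨s, (S'.finite_toSet).subset ?_⟩
    rintro t ⟨γ, hγ, rfl⟩
    exact hinv γ hγ s hs
  tfae_have 3 → 4 := by
    rintro ⟨s, hs⟩ t
    -- orbit of t is covered by finitely many translates of a suborbit
    have : {v : S | ∃ γ ∈ Γ, γ t = v} ⊆
        ⋃ u ∈ {u : S | ∃ γ ∈ Γ, γ s = u}, {v : S | ∃ γ ∈ Γ, γ s = u ∧ γ t = v} := by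
      rintro v ⟨γ, hγ, rfl⟩
      exact Set.mem_biUnion ⟨γ, hγ, rfl⟩ ⟨γ, hγ, rfl, rfl⟩
    refine Set.Finite.subset (Set.Finite.biUnion hs ?_) this
    intro u _
    by_cases hu : ∃ γ₀ ∈ Γ, γ₀ s = u
    · obtain ⟨γ₀, hγ₀, hγ₀s⟩ := hu
      refine ((hsd s t).image γ₀).subset ?_
      rintro v ⟨γ, hγ, hγs, rfl⟩
      refine ⟨γ₀⁻¹ * γ $ t, ⟨γ₀⁻¹ * γ, Γ.mul_mem (Γ.inv_mem hγ₀) hγ, ?_, rfl⟩, ?_⟩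
      · simp [Equiv.Perm.mul_apply, hγs, ← hγ₀s]
      · simp [Equiv.Perm.mul_apply]
    · refine Set.Finite.subset (Set.finite_empty) ?_
      rintro v ⟨γ, hγ, hγs, rfl⟩
      exact absurd ⟨γ, hγ, hγs⟩ hu
  tfae_have 4 → 1 := by
    intro h
    -- the image of Γ in S → S
    set A : Set (S → S) := (fun g : Equiv.Perm S => (g : S → S)) '' (Γ : Set (Equiv.Perm S))
      with hA
    -- A is contained in the compact set K
    set K : Set (S → S) := Set.pi Set.univ fun s => {t | ∃ γ ∈ Γ, γ s = t} with hK
    have hKc : IsCompact K := isCompact_univ_pi fun s => (h s).isCompact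
    have hAK : A ⊆ K := by
      rintro f ⟨g, hg, rfl⟩ s _
      exact ⟨g, hg, rfl⟩
    -- A is closed
    have hAclosed : IsClosed A := by
      rw [← closure_subset_iff_isClosed]
      intro f hf
      -- f is injective
      have hinj : Function.Injective f := by
        intro a b hab
        obtain ⟨g, ⟨g', hg', rfl⟩, hgab⟩ := closure_pi_approx hf {a, b}
        have ha := hgab a (by simp)
        have hb := hgab b (by simp)
        exact g'.injective ((ha.trans hab).trans hb.symm)
      -- f is surjective
      have hsurj : Function.Surjective f := by
        intro v
        have hfin : Set.Finite {t : S | ∃ γ ∈ Γ, γ v = t} := h v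
        obtain ⟨g, ⟨g', hg', hgg'⟩, hgF⟩ := closure_pi_approx hf (insert v hfin.toFinset)
        subst hgg'
        have hv : g'⁻¹ v ∈ insert v hfin.toFinset := by
          simp only [Finset.mem_insert, Set.Finite.mem_toFinset]
          exact Or.inr ⟨g'⁻¹, Γ.inv_mem hg', rfl⟩
        refine ⟨g'⁻¹ v, ?_⟩
        rw [← hgF _ hv]
        exact g'.apply_symm_apply v
      obtain ⟨e, he⟩ := Function.bijective_iff_has_inverse.mp ⟨hinj, hsurj⟩
      set g : Equiv.Perm S := ⟨f, e, he.1, he.2⟩ with hg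
      have hfg : f = (g : S → S) := rfl
      have : g ∈ (Γ : Set (Equiv.Perm S)) := by
        rw [hperm] at hclosed
        exact isClosed_induced_iff'.mp hclosed g (by rw [← hfg]; exact hf)
      exact ⟨g, this, rfl⟩
    have hAcomp : IsCompact A := hKc.of_isClosed_subset hAclosed hAK
    -- Γ is homeomorphic to A
    have hemb : Topology.IsInducing (fun γ : Γ => ((γ : Equiv.Perm S) : S → S)) := ⟨hind⟩
    rw [← isCompact_univ_iff, hemb.isCompact_iff]
    convert hAcomp
    ext f
    constructor
    · rintro ⟨γ, _, rfl⟩; exact ⟨γ, γ.2, rfl⟩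
    · rintro ⟨g, hg, rfl⟩; exact ⟨⟨g, hg⟩, trivial, rfl⟩
  tfae_finish
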